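/- In the smooth RCSN setting, suppose φ is bounded below on E, that x̄ is an accumulation point of (x_k), and that φ satisfies the Kurdyka–Łojasiewicz property at x̄: there exist η > 0 and a continuous concave function ψ : [0,η] → [0,∞) with ψ(0) = 0, ψ differentiable with ψ' > 0 on (0,η), such that ψ'(φ(x) − φ(x̄)) · ‖∇φ(x)‖ ≥ 1 for all x with ‖x − x̄‖ ≤ η and φ(x̄) < φ(x) < φ(x̄) + η. Then Σ_{k=1}^∞ ‖x_{k+1} − x_k‖ < ∞, the whole sequence (x_k) converges to x̄, and ∇φ(x̄) = 0. -/

import Mathlib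

open scoped RealInnerProductSpace
open Filter Topology

section Aux

open Set InnerProductSpace in
theorem rcsn_concave_tangent {η : ℝ} {ψ : ℝ → ℝ} {ψ'b a b : ℝ}
    (hconc : ConcaveOn ℝ (Icc 0 η) ψ) (ha : a ∈ Icc 0 η) (hb : b ∈ Ioo 0 η)
    (hab : a < b) (hd : HasDerivAt ψ ψ'b b) :
    ψ'b * (b - a) ≤ ψ b - ψ a := by
  have hbs : b ∈ Icc 0 η := ⟨hb.1.le, hb.2.le⟩
  have hba : (0:ℝ) < b - a := by linarith
  have key : ψ'b ≤ (ψ b - ψ a) / (b - a) := by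
    have htend : Tendsto (slope ψ b) (𝓝[<] b) (𝓝 ψ'b) :=
      (hasDerivAt_iff_tendsto_slope.1 hd).mono_left
        (nhdsWithin_mono _ (fun z hz => ne_of_lt hz))
    refine le_of_tendsto htend ?_
    filter_upwards [Ioo_mem_nhdsLT_of_mem ⟨hab, le_refl b⟩] with m hm
    have hms : m ∈ Icc 0 η := ⟨ha.1.trans hm.1.le, hm.2.le.trans hb.2.le⟩
    have hthis := hconc.neg.secant_mono hbs ha hms (ne_of_lt hab) (ne_of_lt hm.2) hm.1.le
    simp only [Pi.neg_apply] at hthis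
    have h1 : b - a ≠ 0 := ne_of_gt hba
    have h2 : b - m ≠ 0 := ne_of_gt (by linarith [hm.2] : (0:ℝ) < b - m)
    have h3 : a - b ≠ 0 := fun hc => h1 (by linarith [sub_eq_zero.1 hc])
    have h4 : m - b ≠ 0 := fun hc => h2 (by linarith [sub_eq_zero.1 hc])
    have e1 : (-ψ a - -ψ b) / (a - b) = -((ψ b - ψ a)/(b-a)) := by
      field_simp; ring
    have e2 : (-ψ m - -ψ b) / (m - b) = -((ψ b - ψ m)/(b-m)) := by
      field_simp; ring
    rw [e1, e2, neg_le_neg_iff] at hthis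
    have e3 : slope ψ b m = (ψ b - ψ m)/(b-m) := by
      rw [slope_def_field]; field_simp; ring
    rw [e3]; exact hthis
  calc ψ'b * (b-a) ≤ (ψ b - ψ a)/(b-a) * (b-a) :=
        mul_le_mul_of_nonneg_right key hba.le
    _ = ψ b - ψ a := by field_simp

theorem rcsn_lipOn_sub {E F : Type*} [MetricSpace E] [NormedAddCommGroup F]
    {f g : E → F} {Kf Kg : NNReal} {s : Set E}
    (hf : LipschitzOnWith Kf f s) (hg : LipschitzOnWith Kg g s) :
    LipschitzOnWith (Kf + Kg) (fun y => f y - g y) s := by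
  rw [lipschitzOnWith_iff_dist_le_mul] at *
  intro a ha b hb
  calc dist (f a - g a) (f b - g b) ≤ dist (f a) (f b) + dist (g a) (g b) :=
        dist_sub_sub_le _ _ _ _
    _ ≤ Kf * dist a b + Kg * dist a b := add_le_add (hf a ha b hb) (hg a ha b hb)
    _ = ((Kf + Kg : NNReal) : ℝ) * dist a b := by push_cast; ring

end Aux

theorem rcsn_global_convergence_KL
    {E : Type*} [NormedAddCommGroup E] [InnerProductSpace ℝ E] [FiniteDimensional ℝ E]
    (g h : E → ℝ) (hg : ContDiff ℝ 2 g) (hh : Differentiable ℝ h)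
    (hhl : LocallyLipschitz (gradient h))
    (φ : E → ℝ) (hφ : ∀ y, φ y = g y - h y)
    (σ β ζ tmin ρmax : ℝ)
    (hσ : σ ∈ Set.Ioo (0 : ℝ) 1) (hβ : β ∈ Set.Ioo (0 : ℝ) 1)
    (hζ : 0 < ζ) (htmin : 0 < tmin) (hρmax : 0 ≤ ρmax)
    (x d : ℕ → E) (τ ρ : ℕ → ℝ)
    (hwne : ∀ k, gradient φ (x k) ≠ 0)
    (hρk : ∀ k, ρ k ∈ Set.Icc 0 ρmax)
    (hdne : ∀ k, d k ≠ 0)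
    (hdir : ∀ k, fderiv ℝ (gradient g) (x k) (d k) + ρ k • d k = -(gradient φ (x k)))
    (hdesc : ∀ k, ⟪gradient φ (x k), d k⟫ ≤ -ζ * ‖d k‖ ^ 2)
    (hτpos : ∀ k, 0 < τ k)
    (hls : ∀ k, φ (x k + τ k • d k) ≤ φ (x k) + σ * τ k * ⟪gradient φ (x k), d k⟫)
    (hbt : ∀ k, tmin ≤ τ k ∨
      φ (x k) + σ * (τ k / β) * ⟪gradient φ (x k), d k⟫ < φ (x k + (τ k / β) • d k))
    (hupd : ∀ k, x (k + 1) = x k + τ k • d k)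
    (hbdd : BddBelow (Set.range φ))
    (xb : E)
    (hacc : ∃ s : ℕ → ℕ, StrictMono s ∧ Tendsto (fun j => x (s j)) atTop (𝓝 xb))
    (η : ℝ) (hη : 0 < η) (ψ ψ' : ℝ → ℝ)
    (hψcont : ContinuousOn ψ (Set.Icc 0 η))
    (hψconc : ConcaveOn ℝ (Set.Icc 0 η) ψ)
    (hψ0 : ψ 0 = 0)
    (hψnonneg : ∀ t ∈ Set.Icc (0 : ℝ) η, 0 ≤ ψ t)
    (hψderiv : ∀ t ∈ Set.Ioo (0 : ℝ) η, HasDerivAt ψ (ψ' t) t ∧ 0 < ψ' t)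
    (hKL : ∀ y : E, ‖y - xb‖ ≤ η → φ xb < φ y → φ y < φ xb + η →
      1 ≤ ψ' (φ y - φ xb) * ‖gradient φ y‖) :
    Summable (fun k => ‖x (k + 1) - x k‖) ∧
    Tendsto x atTop (𝓝 xb) ∧ gradient φ xb = 0 := by
  obtain ⟨hσ0, hσ1⟩ := hσ
  obtain ⟨hβ0, hβ1⟩ := hβ
  have hφe : φ = fun y => g y - h y := funext hφ
  subst hφe
  set φ : E → ℝ := fun y => g y - h y with hφdef
  -- basic differentiability facts
  have hgd : Differentiable ℝ g := hg.differentiable (by norm_num)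
  have hφdiff : Differentiable ℝ φ := hgd.sub hh
  have hφcont : Continuous φ := hφdiff.continuous
  have hgradφ : ∀ y, HasGradientAt φ (gradient g y - gradient h y) y := by
    intro y
    have h1 : HasFDerivAt g (InnerProductSpace.toDual ℝ E (gradient g y)) y :=
      (hgd y).hasGradientAt.hasFDerivAt
    have h2 : HasFDerivAt h (InnerProductSpace.toDual ℝ E (gradient h y)) y :=
      (hh y).hasGradientAt.hasFDerivAt
    have := (h1.sub h2).hasGradientAt
    rwa [← map_sub, LinearIsometryEquiv.symm_apply_apply] at this
  have hgeq : gradient φ = fun y => gradient g y - gradient h y :=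
    funext fun y => (hgradφ y).gradient
  have hg1 : ContDiff ℝ 1 (gradient g) := by
    have : ContDiff ℝ 1 (fderiv ℝ g) := hg.fderiv_right (by norm_num)
    exact ((InnerProductSpace.toDual ℝ E).symm.contDiff).comp this
  have hgradcont : Continuous (gradient φ) := by
    rw [hgeq]; exact hg1.continuous.sub hhl.continuous
  -- sufficient decrease
  have hd0 : ∀ k, (0:ℝ) < ‖d k‖ := fun k => norm_pos_iff.2 (hdne k)
  have hdec : ∀ k, φ (x (k+1)) + σ * ζ * (τ k * ‖d k‖^2) ≤ φ (x k) := by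
    intro k
    have h1 := hls k
    rw [← hupd k] at h1
    have h2 : σ * τ k * ⟪gradient φ (x k), d k⟫ ≤ σ * τ k * (-ζ * ‖d k‖^2) :=
      mul_le_mul_of_nonneg_left (hdesc k) (mul_nonneg hσ0.le (hτpos k).le)
    have h3 : σ * τ k * (-ζ * ‖d k‖^2) = -(σ * ζ * (τ k * ‖d k‖^2)) := by ring
    linarith
  have hposdec : ∀ k, (0:ℝ) < σ * ζ * (τ k * ‖d k‖^2) := by
    intro k
    exact mul_pos (mul_pos hσ0 hζ) (mul_pos (hτpos k) (pow_pos (hd0 k) 2))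
  have hstrict : ∀ k, φ (x (k+1)) < φ (x k) := fun k => by linarith [hdec k, hposdec k]
  have hanti : Antitone (fun k => φ (x k)) :=
    antitone_nat_of_succ_le fun k => (hstrict k).le
  obtain ⟨s, hsmono, hslim⟩ := hacc
  have hφslim : Tendsto (fun j => φ (x (s j))) atTop (𝓝 (φ xb)) :=
    (hφcont.continuousAt).tendsto.comp hslim
  have hbdd2 : BddBelow (Set.range fun k => φ (x k)) :=
    hbdd.mono (Set.range_comp_subset_range x φ)
  have hφlim : Tendsto (fun k => φ (x k)) atTop (𝓝 (φ xb)) := by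
    have h1 : Tendsto (fun k => φ (x k)) atTop (𝓝 (⨅ k, φ (x k))) :=
      tendsto_atTop_ciInf hanti hbdd2
    have h2 : Tendsto (fun j => φ (x (s j))) atTop (𝓝 (⨅ k, φ (x k))) :=
      h1.comp hsmono.tendsto_atTop
    have h3 : (⨅ k, φ (x k)) = φ xb := tendsto_nhds_unique h2 hφslim
    rwa [h3] at h1
  have hge : ∀ k, φ xb ≤ φ (x k) := fun k =>
    le_of_tendsto hφlim (eventually_atTop.2 ⟨k, fun m hm => hanti hm⟩)
  have hgt : ∀ k, φ xb < φ (x k) := fun k => lt_of_le_of_lt (hge (k+1)) (hstrict k)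
  -- Φ
  set Φ : ℕ → ℝ := fun k => φ (x k) - φ xb with hΦdef
  have hΦpos : ∀ k, 0 < Φ k := fun k => by simp only [hΦdef]; linarith [hgt k]
  have hΦdec : ∀ k, Φ (k+1) < Φ k := fun k => by
    simp only [hΦdef]; linarith [hstrict k]
  have hΦanti : Antitone Φ := antitone_nat_of_succ_le fun k => (hΦdec k).le
  have hΦlim : Tendsto Φ atTop (𝓝 0) := by
    have := hφlim.sub_const (φ xb)
    simpa using this
  -- Lipschitz constant for gradient φ near xb
  obtain ⟨Kh, th, hth, hlh⟩ := hhl xb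
  obtain ⟨Kg, tg, htg, hlg⟩ := hg1.locallyLipschitz xb
  obtain ⟨rh, hrh, hballh⟩ := Metric.nhds_basis_closedBall.mem_iff.1 hth
  obtain ⟨rg, hrg, hballg⟩ := Metric.nhds_basis_closedBall.mem_iff.1 htg
  set r1 : ℝ := min rh rg with hr1def
  have hr1 : 0 < r1 := lt_min hrh hrg
  have hLip0 : LipschitzOnWith (Kg + Kh) (gradient φ) (Metric.closedBall xb r1) := by
    rw [hgeq]
    exact rcsn_lipOn_sub
      (hlg.mono ((Metric.closedBall_subset_closedBall (min_le_right rh rg)).trans hballg))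
      (hlh.mono ((Metric.closedBall_subset_closedBall (min_le_left rh rg)).trans hballh))
  set Lr : ℝ := ((Kg + Kh : NNReal) : ℝ) + 1 with hLrdef
  have hLrpos : 0 < Lr := by positivity
  have hLipR : ∀ a ∈ Metric.closedBall xb r1, ∀ b ∈ Metric.closedBall xb r1,
      ‖gradient φ a - gradient φ b‖ ≤ Lr * ‖a - b‖ := by
    intro a ha b hb
    have h1 := (lipschitzOnWith_iff_dist_le_mul.1 hLip0) a ha b hb
    rw [dist_eq_norm, dist_eq_norm] at h1
    refine h1.trans (mul_le_mul_of_nonneg_right ?_ (norm_nonneg _))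
    simp only [hLrdef]; linarith
  -- bound on Hessian of g
  obtain ⟨M, hM⟩ := (isCompact_closedBall xb r1).exists_bound_of_continuousOn
    ((hg1.continuous_fderiv (by norm_num)).continuousOn
      (s := Metric.closedBall xb r1))
  set C : ℝ := max M 0 + ρmax + 1 with hCdef
  have hC1 : (1:ℝ) ≤ C := by simp only [hCdef]; have := le_max_right M (0:ℝ); linarith
  have hC0 : (0:ℝ) < C := by linarith
  set r : ℝ := min r1 η with hrdef
  have hr0 : 0 < r := lt_min hr1 hη
  have hrη : r ≤ η := min_le_right _ _
  have hrr1 : r ≤ r1 := min_le_left _ _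
  -- gradient bounded by C ‖d k‖ on the ball
  have hwb : ∀ k, x k ∈ Metric.closedBall xb r → ‖gradient φ (x k)‖ ≤ C * ‖d k‖ := by
    intro k hk
    have hk1 : x k ∈ Metric.closedBall xb r1 :=
      Metric.closedBall_subset_closedBall hrr1 hk
    have h1 : gradient φ (x k) = -(fderiv ℝ (gradient g) (x k) (d k) + ρ k • d k) := by
      rw [hdir k, neg_neg]
    rw [h1, norm_neg]
    calc ‖fderiv ℝ (gradient g) (x k) (d k) + ρ k • d k‖
        ≤ ‖fderiv ℝ (gradient g) (x k) (d k)‖ + ‖ρ k • d k‖ := norm_add_le _ _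
      _ ≤ ‖fderiv ℝ (gradient g) (x k)‖ * ‖d k‖ + ρmax * ‖d k‖ := by
          refine add_le_add ((fderiv ℝ (gradient g) (x k)).le_opNorm (d k)) ?_
          rw [norm_smul, Real.norm_eq_abs, abs_of_nonneg (hρk k).1]
          exact mul_le_mul_of_nonneg_right (hρk k).2 (norm_nonneg _)
      _ ≤ C * ‖d k‖ := by
          refine le_trans (add_le_add
            (mul_le_mul_of_nonneg_right ((hM _ hk1).trans (le_max_left M 0))
              (norm_nonneg _)) le_rfl) ?_
          have : max M 0 * ‖d k‖ + ρmax * ‖d k‖ = (max M 0 + ρmax) * ‖d k‖ := by ring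
          rw [this]
          exact mul_le_mul_of_nonneg_right (by simp only [hCdef]; linarith)
            (norm_nonneg _)
  set c : ℝ := σ * ζ / C with hcdef
  have hc0 : 0 < c := div_pos (mul_pos hσ0 hζ) hC0
  -- step length
  have hsteplen : ∀ k, ‖x (k+1) - x k‖ = τ k * ‖d k‖ := by
    intro k
    rw [hupd k, add_sub_cancel_left, norm_smul, Real.norm_eq_abs,
      abs_of_pos (hτpos k)]
  -- one-step KL estimate
  have hkey : ∀ k, x k ∈ Metric.closedBall xb r → Φ k < η →
      c * ‖x (k+1) - x k‖ ≤ ψ (Φ k) - ψ (Φ (k+1)) := by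
    intro k hball hΦη
    have hbI : Φ k ∈ Set.Ioo (0:ℝ) η := ⟨hΦpos k, hΦη⟩
    have haI : Φ (k+1) ∈ Set.Icc (0:ℝ) η :=
      ⟨(hΦpos (k+1)).le, by linarith [hΦdec k]⟩
    have tangent := rcsn_concave_tangent hψconc haI hbI (hΦdec k) (hψderiv _ hbI).1
    have hKLk : 1 ≤ ψ' (Φ k) * ‖gradient φ (x k)‖ := by
      refine hKL (x k) ?_ (hgt k) ?_
      · rw [← dist_eq_norm]
        exact le_trans (Metric.mem_closedBall.1 hball) (by linarith)
      · have := hΦη; simp only [hΦdef] at this ⊢; linarith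
    have hw := hwb k hball
    have hψ'pos := (hψderiv _ hbI).2
    have hdecr : σ * ζ * (τ k * ‖d k‖^2) ≤ Φ k - Φ (k+1) := by
      simp only [hΦdef]; linarith [hdec k]
    have hmid : c * (τ k * ‖d k‖) ≤ ψ' (Φ k) * (σ * ζ * (τ k * ‖d k‖^2)) := by
      have hwpos : 0 < ‖gradient φ (x k)‖ := norm_pos_iff.2 (hwne k)
      have hnn : 0 ≤ c * (τ k * ‖d k‖) :=
        mul_nonneg hc0.le (mul_nonneg (hτpos k).le (norm_nonneg _))
      calc c * (τ k * ‖d k‖)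
          ≤ c * (τ k * ‖d k‖) * (ψ' (Φ k) * ‖gradient φ (x k)‖) :=
            le_mul_of_one_le_right hnn hKLk
        _ ≤ c * (τ k * ‖d k‖) * (ψ' (Φ k) * (C * ‖d k‖)) :=
            mul_le_mul_of_nonneg_left
              (mul_le_mul_of_nonneg_left hw hψ'pos.le) hnn
        _ = ψ' (Φ k) * (σ * ζ * (τ k * ‖d k‖^2)) := by
            rw [hcdef]; field_simp
    calc c * ‖x (k+1) - x k‖ = c * (τ k * ‖d k‖) := by rw [hsteplen k]
      _ ≤ ψ' (Φ k) * (σ * ζ * (τ k * ‖d k‖^2)) := hmid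
      _ ≤ ψ' (Φ k) * (Φ k - Φ (k+1)) :=
          mul_le_mul_of_nonneg_left hdecr hψ'pos.le
      _ ≤ ψ (Φ k) - ψ (Φ (k+1)) := tangent
  -- choose starting index K0
  have hΦs : Tendsto (fun j => Φ (s j)) atTop (𝓝 0) := hΦlim.comp hsmono.tendsto_atTop
  have hψc0 : Tendsto (fun j => ψ (Φ (s j))) atTop (𝓝 0) := by
    have hcw : ContinuousWithinAt ψ (Set.Icc 0 η) 0 := hψcont 0 ⟨le_rfl, hη.le⟩
    have hmem : ∀ᶠ j in atTop, Φ (s j) ∈ Set.Icc (0:ℝ) η := by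
      filter_upwards [hΦs.eventually (gt_mem_nhds hη)] with j hj
      exact ⟨(hΦpos _).le, hj.le⟩
    have := hcw.tendsto.comp (tendsto_nhdsWithin_iff.2 ⟨hΦs, hmem⟩)
    rwa [hψ0] at this
  have hev1 : ∀ᶠ j in atTop, x (s j) ∈ Metric.closedBall xb (r/2) :=
    hslim.eventually (Metric.closedBall_mem_nhds xb (half_pos hr0))
  have hev2 : ∀ᶠ j in atTop, ψ (Φ (s j)) < c * r / 2 :=
    hψc0.eventually (gt_mem_nhds (by positivity))
  have hev3 : ∀ᶠ j in atTop, Φ (s j) < η := hΦs.eventually (gt_mem_nhds hη)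
  obtain ⟨j0, hj1, hj2, hj3⟩ := (hev1.and (hev2.and hev3)).exists
  set K0 : ℕ := s j0 with hK0def
  have hΦKη : ∀ n : ℕ, Φ (K0 + n) < η :=
    fun n => lt_of_le_of_lt (hΦanti (Nat.le_add_right K0 n)) hj3
  have hψKle : ψ (Φ K0) / c ≤ r / 2 := by
    rw [div_le_iff₀ hc0]
    linarith [hj2]
  have hψnn : ∀ n : ℕ, 0 ≤ ψ (Φ (K0 + n)) :=
    fun n => hψnonneg _ ⟨(hΦpos _).le, (hΦKη n).le⟩
  -- main induction
  have main : ∀ n : ℕ,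
      (∑ i ∈ Finset.range n, ‖x (K0+i+1) - x (K0+i)‖) + ψ (Φ (K0+n))/c ≤ ψ (Φ K0)/c ∧
      ‖x (K0+n) - xb‖ ≤ r/2 + (∑ i ∈ Finset.range n, ‖x (K0+i+1) - x (K0+i)‖) := by
    intro n
    induction n with
    | zero =>
      refine ⟨by simp, ?_⟩
      simp only [Finset.range_zero, Finset.sum_empty, Nat.add_zero, add_zero]
      rw [← dist_eq_norm]
      exact hj1
    | succ n ih =>
      obtain ⟨ih1, ih2⟩ := ih
      have hSnonneg : 0 ≤ ∑ i ∈ Finset.range n, ‖x (K0+i+1) - x (K0+i)‖ :=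
        Finset.sum_nonneg fun i _ => norm_nonneg _
      have hψdivnn : 0 ≤ ψ (Φ (K0+n))/c := div_nonneg (hψnn n) hc0.le
      have hball : x (K0+n) ∈ Metric.closedBall xb r := by
        rw [Metric.mem_closedBall, dist_eq_norm]
        have hS : (∑ i ∈ Finset.range n, ‖x (K0+i+1) - x (K0+i)‖) ≤ r/2 := by
          linarith [hψKle]
        linarith
      have hk := hkey (K0+n) hball (hΦKη n)
      have hstep : ‖x (K0+n+1) - x (K0+n)‖ ≤ ψ (Φ (K0+n))/c - ψ (Φ (K0+n+1))/c := by
        rw [← sub_div, le_div_iff₀ hc0]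
        linarith [hk]
      constructor
      · rw [Finset.sum_range_succ]
        have : Φ (K0 + (n+1)) = Φ (K0 + n + 1) := by rw [Nat.add_assoc]
        rw [this]
        linarith
      · rw [Finset.sum_range_succ]
        have htri : ‖x (K0+n+1) - xb‖ ≤ ‖x (K0+n+1) - x (K0+n)‖ + ‖x (K0+n) - xb‖ := by
          have := dist_triangle (x (K0+n+1)) (x (K0+n)) xb
          simpa [dist_eq_norm] using this
        have : K0 + (n+1) = K0 + n + 1 := by rw [Nat.add_assoc]
        rw [this]
        linarith
  -- summability
  have hSummable1 : Summable (fun i => ‖x (K0+i+1) - x (K0+i)‖) := by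
    refine summable_of_sum_range_le (c := ψ (Φ K0)/c) (fun i => norm_nonneg _) (fun n => ?_)
    have := (main n).1
    have hψdivnn : 0 ≤ ψ (Φ (K0+n))/c := div_nonneg (hψnn n) hc0.le
    linarith
  have hSummable : Summable (fun k => ‖x (k + 1) - x k‖) := by
    refine (summable_nat_add_iff K0).1 ?_
    exact hSummable1.congr (fun i => by rw [Nat.add_comm K0 i])
  -- convergence of x
  have hsum_dist : Summable (fun n => dist (x n) (x (n+1))) :=
    hSummable.congr (fun n => by rw [dist_eq_norm, norm_sub_rev])
  have hcauchy := cauchySeq_of_summable_dist hsum_dist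
  obtain ⟨l, hl⟩ := cauchySeq_tendsto_of_complete hcauchy
  have hlxb : l = xb := tendsto_nhds_unique (hl.comp hsmono.tendsto_atTop) hslim
  have hxlim : Tendsto x atTop (𝓝 xb) := hlxb ▸ hl
  -- derivative of t ↦ φ (x k + t • d k)
  have hFd : ∀ (k : ℕ) (t : ℝ),
      HasDerivAt (fun t : ℝ => φ (x k + t • d k))
        ⟪gradient φ (x k + t • d k), d k⟫ t := by
    intro k t
    have hline : HasDerivAt (fun t : ℝ => x k + t • d k) (d k) t := by
      simpa using ((hasDerivAt_id t).smul_const (d k)).const_add (x k)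
    have hf : HasFDerivAt φ
        (InnerProductSpace.toDual ℝ E (gradient φ (x k + t • d k))) (x k + t • d k) :=
      (hφdiff _).hasGradientAt.hasFDerivAt
    have := hf.comp_hasDerivAt t hline
    simpa [InnerProductSpace.toDual_apply_apply, Function.comp_def] using this
  have hτd : Tendsto (fun k => ‖x (k+1) - x k‖) atTop (𝓝 0) :=
    hSummable.tendsto_atTop_zero
  set t0 : ℝ := min tmin (β * (1 - σ) * ζ / Lr) with ht0def
  have ht0 : 0 < t0 := by
    refine lt_min htmin (div_pos ?_ hLrpos)
    have : 0 < 1 - σ := by linarith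
    positivity
  have hevb1 : ∀ᶠ k in atTop, x k ∈ Metric.closedBall xb (r/2) :=
    hxlim.eventually (Metric.closedBall_mem_nhds xb (half_pos hr0))
  have hevb2 : ∀ᶠ k in atTop, ‖x (k+1) - x k‖ / β < r/2 :=
    (hτd.div_const β).eventually (gt_mem_nhds (by simpa using half_pos hr0))
  have hτlb : ∀ᶠ k in atTop, t0 ≤ τ k := by
    filter_upwards [hevb1, hevb2] with k hk1 hk2
    rcases hbt k with hcase | hcase
    · exact le_trans (min_le_left _ _) hcase
    · -- mean value theorem argument on the failed backtracking step
      set T : ℝ := τ k / β with hTdef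
      have hT : 0 < T := div_pos (hτpos k) hβ0
      have hFc : ContinuousOn (fun t : ℝ => φ (x k + t • d k)) (Set.Icc 0 T) :=
        fun t _ => (hFd k t).continuousAt.continuousWithinAt
      obtain ⟨ξ, hξ, hξeq⟩ := exists_hasDerivAt_eq_slope
        (fun t : ℝ => φ (x k + t • d k))
        (fun t : ℝ => ⟪gradient φ (x k + t • d k), d k⟫) hT hFc (fun t _ => hFd k t)
      simp only [zero_smul, add_zero, sub_zero] at hξeq
      have hquot : σ * ⟪gradient φ (x k), d k⟫ <
          (φ (x k + T • d k) - φ (x k)) / T := by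
        rw [lt_div_iff₀ hT]
        linarith [hcase]
      rw [← hξeq] at hquot
      -- both points lie in the ball of radius r
      have hsteq : ‖x (k+1) - x k‖ = τ k * ‖d k‖ := hsteplen k
      have hTd : T * ‖d k‖ < r / 2 := by
        have : ‖x (k+1) - x k‖ / β = T * ‖d k‖ := by
          rw [hsteq, hTdef]; field_simp
        linarith [this ▸ hk2]
      have hξd : ‖(x k + ξ • d k) - x k‖ ≤ T * ‖d k‖ := by
        rw [add_sub_cancel_left, norm_smul, Real.norm_eq_abs, abs_of_pos hξ.1]
        exact mul_le_mul_of_nonneg_right hξ.2.le (norm_nonneg _)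
      have hxkball : x k ∈ Metric.closedBall xb r1 := by
        refine Metric.closedBall_subset_closedBall ?_ hk1
        linarith
      have hξball : (x k + ξ • d k) ∈ Metric.closedBall xb r1 := by
        rw [Metric.mem_closedBall]
        calc dist (x k + ξ • d k) xb ≤ dist (x k + ξ • d k) (x k) + dist (x k) xb :=
              dist_triangle _ _ _
          _ ≤ T * ‖d k‖ + r/2 := by
              refine add_le_add ?_ hk1
              rw [dist_eq_norm]; exact hξd
          _ ≤ r1 := by
              have : r ≤ r1 := hrr1
              linarith
      have hlip := hLipR (x k + ξ • d k) hξball (x k) hxkball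
      have hinner : ⟪gradient φ (x k + ξ • d k) - gradient φ (x k), d k⟫ ≤
          Lr * (T * ‖d k‖) * ‖d k‖ := by
        calc ⟪gradient φ (x k + ξ • d k) - gradient φ (x k), d k⟫ ≤
            ‖gradient φ (x k + ξ • d k) - gradient φ (x k)‖ * ‖d k‖ :=
              real_inner_le_norm _ _
          _ ≤ (Lr * ‖(x k + ξ • d k) - x k‖) * ‖d k‖ :=
              mul_le_mul_of_nonneg_right hlip (norm_nonneg _)
          _ ≤ Lr * (T * ‖d k‖) * ‖d k‖ := by
              refine mul_le_mul_of_nonneg_right ?_ (norm_nonneg _)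
              exact mul_le_mul_of_nonneg_left hξd hLrpos.le
      have hsplit : ⟪gradient φ (x k + ξ • d k), d k⟫ =
          ⟪gradient φ (x k), d k⟫ +
          ⟪gradient φ (x k + ξ • d k) - gradient φ (x k), d k⟫ := by
        rw [inner_sub_left]; ring
      have hWd := hdesc k
      have hD2 : (0:ℝ) < ‖d k‖^2 := pow_pos (hd0 k) 2
      -- conclude (1-σ) ζ < Lr * T
      have hfin : (1 - σ) * ζ < Lr * T := by
        have h5 : σ * ⟪gradient φ (x k), d k⟫ <
            ⟪gradient φ (x k), d k⟫ + Lr * (T * ‖d k‖) * ‖d k‖ := by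
          rw [hsplit] at hquot; linarith
        have p1 := mul_le_mul_of_nonneg_left hWd (by linarith : (0:ℝ) ≤ 1 - σ)
        have h6 : ((1 - σ) * ζ) * ‖d k‖^2 < (Lr * T) * ‖d k‖^2 := by linarith
        exact lt_of_mul_lt_mul_right h6 hD2.le
      have hτk : β * (1 - σ) * ζ / Lr < τ k := by
        have hTτ : T * β = τ k := by rw [hTdef]; field_simp
        rw [div_lt_iff₀ hLrpos, ← hTτ]
        have := mul_lt_mul_of_pos_left hfin hβ0
        linarith
      exact le_trans (min_le_right _ _) hτk.le
  -- d k → 0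
  have hdlim : Tendsto (fun k => ‖d k‖) atTop (𝓝 0) := by
    refine squeeze_zero' (g := fun k => ‖x (k+1) - x k‖ / t0)
      (Eventually.of_forall fun k => norm_nonneg _) ?_ ?_
    · filter_upwards [hτlb] with k hk
      show ‖d k‖ ≤ ‖x (k+1) - x k‖ / t0
      rw [le_div_iff₀ ht0, hsteplen k]
      linarith [mul_le_mul_of_nonneg_right hk (norm_nonneg (d k))]
    · simpa using hτd.div_const t0
  have hwlim : Tendsto (fun k => gradient φ (x k)) atTop (𝓝 0) := by
    refine squeeze_zero_norm' ?_ (by simpa using hdlim.const_mul C)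
    filter_upwards [hxlim.eventually (Metric.closedBall_mem_nhds xb hr0)] with k hk
    exact hwb k hk
  have hw2 : Tendsto (fun k => gradient φ (x k)) atTop (𝓝 (gradient φ xb)) :=
    (hgradcont.continuousAt).tendsto.comp hxlim
  exact ⟨hSummable, hxlim, tendsto_nhds_unique hw2 hwlim⟩
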